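/- Let n ≥ 3 be an odd integer and let l, l' be integers with 1 ≤ l ≤ n−1 and 1 ≤ l' ≤ n−1, and let σ ∈ {1, −1}. If cos(2πl/n) + sin(2πl/n) = σ·(cos(2πl'/n) + sin(2πl'/n)), then l = l' and σ = 1. -/

import Mathlib

lemma cos_add_sin_eq (x : ℝ) :
    Real.cos x + Real.sin x = Real.sqrt 2 * Real.sin (x + Real.pi/4) := by
  rw [Real.sin_add, Real.sin_pi_div_four, Real.cos_pi_div_four]
  have h2 : Real.sqrt 2 * Real.sqrt 2 = 2 := Real.mul_self_sqrt (by norm_num)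
  linear_combination (-(Real.sin x + Real.cos x)/2) * h2

/-- For odd `n ≥ 3`, integers `1 ≤ l, l' ≤ n−1` and a sign `σ = ±1`, the identity
`cos(2πl/n) + sin(2πl/n) = σ·(cos(2πl'/n) + sin(2πl'/n))` forces `l = l'` and `σ = 1`. -/
theorem lissajous_stmt10 (n : ℕ) (hn : 3 ≤ n) (hodd : Odd n) (l l' : ℕ)
    (hl1 : 1 ≤ l) (hl2 : l ≤ n - 1) (hl'1 : 1 ≤ l') (hl'2 : l' ≤ n - 1)
    (σ : ℝ) (hσ : σ = 1 ∨ σ = -1)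
    (h : Real.cos (2 * Real.pi * l / n) + Real.sin (2 * Real.pi * l / n) =
      σ * (Real.cos (2 * Real.pi * l' / n) + Real.sin (2 * Real.pi * l' / n))) :
    l = l' ∧ σ = 1 := by
  have hn0 : (n:ℝ) ≠ 0 := Nat.cast_ne_zero.mpr (by omega)
  have hπ := Real.pi_ne_zero
  obtain ⟨m, hm⟩ := hodd
  rw [cos_add_sin_eq, cos_add_sin_eq] at h
  have hs2 : Real.sqrt 2 ≠ 0 := by positivity
  have hsin : Real.sin (2 * Real.pi * l / n + Real.pi/4)
      = σ * Real.sin (2 * Real.pi * l' / n + Real.pi/4) := by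
    apply mul_left_cancel₀ hs2; linarith [h]
  rcases hσ with rfl | rfl
  · refine ⟨?_, rfl⟩
    rw [one_mul, Real.sin_eq_sin_iff] at hsin
    obtain ⟨k, hk | hk⟩ := hsin
    · -- 2πl'/n + π/4 = 2kπ + 2πl/n + π/4
      have h2 : Real.pi * ((l':ℝ)/n) = Real.pi * ((k:ℝ) + l/n) := by
        ring_nf; ring_nf at hk; linarith
      have h3 := mul_left_cancel₀ hπ h2
      have h4 : (l':ℝ) = k*n + l := by field_simp at h3; linarith
      have h5 : (l':ℤ) = k*n + l := by exact_mod_cast h4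
      have hkn : (k:ℤ)*n = l' - l := by omega
      have hn' : (0:ℤ) < n := by exact_mod_cast (by omega : 0 < n)
      have hb1 : (k:ℤ)*n < 1*n := by
        rw [hkn, one_mul]
        have : (l':ℤ) ≤ n - 1 := by exact_mod_cast (by omega : (l':ℤ) ≤ (n:ℤ) - 1)
        omega
      have hb2 : (-1:ℤ)*n < k*n := by
        rw [hkn]
        have : (l:ℤ) ≤ n - 1 := by exact_mod_cast (by omega : (l:ℤ) ≤ (n:ℤ) - 1)
        omega
      have hk1 : (k:ℤ) < 1 := lt_of_mul_lt_mul_right (by linarith) (le_of_lt hn')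
      have hk2 : (-1:ℤ) < k := lt_of_mul_lt_mul_right (by linarith) (le_of_lt hn')
      have : k = 0 := by omega
      subst this
      omega
    · -- 2πl'/n + π/4 = (2k+1)π - (2πl/n + π/4)
      exfalso
      have h2 : Real.pi * (2*(l':ℝ)/n + 2*l/n + 1/2) = Real.pi * ((2*(k:ℝ)+1)) := by
        ring_nf; ring_nf at hk; linarith
      have h3 := mul_left_cancel₀ hπ h2
      have h4 : 4*(l':ℝ) + 4*l + n = (2*(k:ℝ)+1)*(2*n) := by
        field_simp at h3; linarith
      have h5 : 4*(l':ℤ) + 4*l + n = (2*k+1)*(2*n) := by exact_mod_cast h4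
      have hm' : (n:ℤ) = 2*m + 1 := by exact_mod_cast hm
      set t : ℤ := (2*k+1)*n with ht
      have h6 : 4*(l':ℤ) + 4*l + n = 2*t := by rw [ht]; linarith
      omega
  · exfalso
    rw [neg_one_mul, ← Real.sin_neg, Real.sin_eq_sin_iff] at hsin
    obtain ⟨k, hk | hk⟩ := hsin
    · -- -(2πl'/n + π/4) = 2kπ + 2πl/n + π/4
      have h2 : Real.pi * (-(2*(l':ℝ)/n) - 2*l/n - 1/2) = Real.pi * (2*(k:ℝ)) := by
        ring_nf; ring_nf at hk; linarith
      have h3 := mul_left_cancel₀ hπ h2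
      have h4 : -(4*(l':ℝ)) - 4*l - n = (2*(k:ℝ))*(2*n) := by
        field_simp at h3
        have h4' : (-(4*(l':ℝ)) - 4*l - n) * n = ((2*(k:ℝ))*(2*n)) * n := by
          linear_combination (n:ℝ) * h3
        exact mul_right_cancel₀ hn0 h4'
      have h5 : -(4*(l':ℤ)) - 4*l - n = (2*k)*(2*n) := by exact_mod_cast h4
      have hm' : (n:ℤ) = 2*m + 1 := by exact_mod_cast hm
      set t : ℤ := 2*k*n with ht
      have h6 : -(4*(l':ℤ)) - 4*l - n = 2*t := by rw [ht]; linarith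
      omega
    · -- -(2πl'/n + π/4) = (2k+1)π - (2πl/n + π/4)
      have h2 : Real.pi * (2*(l:ℝ)/n - 2*l'/n) = Real.pi * ((2*(k:ℝ)+1)) := by
        ring_nf; ring_nf at hk; linarith
      have h3 := mul_left_cancel₀ hπ h2
      have h4 : 2*(l:ℝ) - 2*l' = (2*(k:ℝ)+1)*n := by
        field_simp at h3; linarith
      have h5 : 2*(l:ℤ) - 2*l' = (2*k+1)*n := by exact_mod_cast h4
      have hm' : (n:ℤ) = 2*m + 1 := by exact_mod_cast hm
      set t : ℤ := (2*k+1)*n with ht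
      have h6 : 2*(l:ℤ) - 2*l' = t := by rw [ht]; linarith
      -- t = (2k+1)(2m+1) is odd
      have hoddt : t % 2 = 1 := by
        rw [ht, hm', Int.mul_emod]
        have e1 : (2*k+1) % 2 = 1 := by omega
        have e2 : (2*(m:ℤ)+1) % 2 = 1 := by omega
        rw [e1, e2]; norm_num
      omega
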